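/- Let μ ∈ ℝ, σ > 0, β ≥ 0, let u(x) = ( (x−μ)/σ² , ((x−μ)² − σ²)/σ³ ), and set ξ = ∫_ℝ u(x)·φ_{μ,σ}(x)^(1+β) dx. Then the 2×2 matrix K_β = ∫_ℝ u(x)·u(x)ᵀ·φ_{μ,σ}(x)^(1+2β) dx − ξ·ξᵀ equals ( σ^(2+2β) (2π)^β )^(−1) times [ (1+2β)^(−3/2)·diag( 1 , (4β²+2)/(1+2β) ) − diag( 0 , β²/(1+β)³ ) ]. -/

import Mathlib

open MeasureTheory Real

/-- The normal density with mean `μ` and standard deviation `σ`. -/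
noncomputable def normalPdf (μ σ x : ℝ) : ℝ :=
  (2 * Real.pi * σ ^ 2) ^ (-(1 / 2) : ℝ) * Real.exp (-(x - μ) ^ 2 / (2 * σ ^ 2))

/-- The normal score vector `u(x) = ( (x−μ)/σ² , ((x−μ)² − σ²)/σ³ )`. -/
noncomputable def normalScore (μ σ x : ℝ) : Fin 2 → ℝ :=
  ![(x - μ) / σ ^ 2, ((x - μ) ^ 2 - σ ^ 2) / σ ^ 3]


lemma integrable_pow_gauss {b : ℝ} (hb : 0 < b) (n : ℕ) :
    Integrable (fun x : ℝ => x ^ n * Real.exp (-(b * x ^ 2))) := by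
  have h := integrable_rpow_mul_exp_neg_mul_sq hb (s := (n : ℝ))
    (lt_of_lt_of_le neg_one_lt_zero (Nat.cast_nonneg n))
  simpa [neg_mul, Real.rpow_natCast] using h

lemma gauss_deriv {b : ℝ} (hb : b ≠ 0) (n : ℕ) (x : ℝ) :
    HasDerivAt (fun x : ℝ => (-(2*b))⁻¹ * (x ^ n * Real.exp (-(b * x ^ 2))))
      ((-(2*b))⁻¹ * ((n : ℝ) * x ^ (n-1) * Real.exp (-(b * x ^ 2)))
        + x ^ (n+1) * Real.exp (-(b * x ^ 2))) x := by
  have h1 : HasDerivAt (fun x : ℝ => Real.exp (-(b * x ^ 2)))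
      (Real.exp (-(b * x ^ 2)) * (-b * (2 * x))) x := by
    have : HasDerivAt (fun x : ℝ => -(b * x ^ 2)) (-b * (2 * x)) x := by
      simpa using ((hasDerivAt_pow 2 x).const_mul (-b))
    exact this.exp
  have h2 : HasDerivAt (fun x : ℝ => x ^ n) ((n:ℝ) * x ^ (n-1)) x := hasDerivAt_pow n x
  have h3 := (h2.mul h1).const_mul (-(2*b))⁻¹
  convert h3 using 1
  · rfl
  · rfl
  · rfl
  field_simp
  ring

lemma gauss_rec {b : ℝ} (hb : 0 < b) (n : ℕ) :
    ∫ x : ℝ, x ^ (n+1) * Real.exp (-(b * x ^ 2))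
      = (n : ℝ) / (2*b) * ∫ x : ℝ, x ^ (n-1) * Real.exp (-(b * x ^ 2)) := by
  have hf' : Integrable (fun x : ℝ =>
      (-(2*b))⁻¹ * ((n : ℝ) * x ^ (n-1) * Real.exp (-(b * x ^ 2)))
        + x ^ (n+1) * Real.exp (-(b * x ^ 2))) := by
    refine Integrable.add ?_ (integrable_pow_gauss hb (n+1))
    have := ((integrable_pow_gauss hb (n-1)).const_mul ((-(2*b))⁻¹ * (n:ℝ)))
    convert this using 2 with x
    · rfl
    ring
  have hf : Integrable (fun x : ℝ => (-(2*b))⁻¹ * (x ^ n * Real.exp (-(b * x ^ 2)))) :=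
    (integrable_pow_gauss hb n).const_mul _
  have h0 := integral_eq_zero_of_hasDerivAt_of_integrable
    (fun x => gauss_deriv (ne_of_gt hb) n x) hf' hf
  rw [integral_add (by
      have := ((integrable_pow_gauss hb (n-1)).const_mul ((-(2*b))⁻¹ * (n:ℝ)))
      convert this using 2 with x; ring) (integrable_pow_gauss hb (n+1))] at h0
  have h1 : ∫ x : ℝ, (-(2*b))⁻¹ * ((n : ℝ) * x ^ (n-1) * Real.exp (-(b * x ^ 2)))
      = (-(2*b))⁻¹ * (n:ℝ) * ∫ x : ℝ, x ^ (n-1) * Real.exp (-(b * x ^ 2)) := by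
    rw [← integral_const_mul]
    congr 1 with x
    ring
  rw [h1] at h0
  have hb' : (2*b) ≠ 0 := by positivity
  field_simp at h0 ⊢
  linarith

lemma gauss0 {b : ℝ} (hb : 0 < b) :
    ∫ x : ℝ, Real.exp (-(b * x ^ 2)) = Real.sqrt (π / b) := by simpa [neg_mul] using integral_gaussian b

lemma gauss1 {b : ℝ} (hb : 0 < b) : ∫ x : ℝ, x * Real.exp (-(b * x ^ 2)) = 0 := by
  have := gauss_rec hb 0
  simpa using this

lemma gauss2 {b : ℝ} (hb : 0 < b) :
    ∫ x : ℝ, x ^ 2 * Real.exp (-(b * x ^ 2)) = Real.sqrt (π / b) / (2*b) := by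
  have h := gauss_rec hb 1
  simp [gauss0 hb] at h
  rw [h]; ring

lemma gauss3 {b : ℝ} (hb : 0 < b) : ∫ x : ℝ, x ^ 3 * Real.exp (-(b * x ^ 2)) = 0 := by
  have h := gauss_rec hb 2
  simpa [pow_one, gauss1 hb] using h

lemma gauss4 {b : ℝ} (hb : 0 < b) :
    ∫ x : ℝ, x ^ 4 * Real.exp (-(b * x ^ 2)) = 3 * Real.sqrt (π / b) / (4*b^2) := by
  have h := gauss_rec hb 3
  rw [gauss2 hb] at h
  rw [h]
  field_simp
  ring

lemma normalPdf_rpow (μ σ : ℝ) (hσ : 0 < σ) (c x : ℝ) :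
    normalPdf μ σ x ^ c
      = (2 * Real.pi * σ ^ 2) ^ (-(c/2)) *
        Real.exp (-(c / (2 * σ ^ 2) * (x - μ) ^ 2)) := by
  unfold normalPdf
  have h1 : (0:ℝ) < 2 * Real.pi * σ ^ 2 := by positivity
  rw [Real.mul_rpow (Real.rpow_pos_of_pos h1 _).le (Real.exp_pos _).le,
    ← Real.rpow_mul h1.le, ← Real.exp_mul]
  have hs : (σ:ℝ)^2 ≠ 0 := by positivity
  ring_nf

variable {μ σ c : ℝ}

lemma integrable_pow_pdf (hσ : 0 < σ) (hc : 0 < c) (n : ℕ) :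
    Integrable (fun x : ℝ => (x - μ) ^ n * normalPdf μ σ x ^ c) := by
  have ha : (0:ℝ) < c / (2 * σ ^ 2) := by positivity
  have hg : Integrable (fun t : ℝ =>
      t ^ n * ((2 * Real.pi * σ ^ 2) ^ (-(c/2)) * Real.exp (-(c/(2*σ^2) * t^2)))) := by
    have h := (integrable_pow_gauss ha n).const_mul ((2 * Real.pi * σ ^ 2) ^ (-(c/2)))
    convert h using 2 with t
    ring_nf
  have := hg.comp_sub_right μ
  convert this using 2 with x
  rw [normalPdf_rpow μ σ hσ c]

lemma integral_pow_pdf (hσ : 0 < σ) (hc : 0 < c) (n : ℕ) :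
    ∫ x : ℝ, (x - μ) ^ n * normalPdf μ σ x ^ c
      = (2 * Real.pi * σ ^ 2) ^ (-(c/2)) *
        ∫ x : ℝ, x ^ n * Real.exp (-(c/(2*σ^2) * x^2)) := by
  have h := integral_sub_right_eq_self (μ := volume)
    (fun t : ℝ => t ^ n * ((2 * Real.pi * σ ^ 2) ^ (-(c/2)) * Real.exp (-(c/(2*σ^2) * t^2)))) μ
  calc ∫ x : ℝ, (x - μ) ^ n * normalPdf μ σ x ^ c
      = ∫ x : ℝ, (x-μ) ^ n * ((2 * Real.pi * σ ^ 2) ^ (-(c/2)) *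
          Real.exp (-(c/(2*σ^2) * (x-μ)^2))) := by
        congr 1 with x; rw [normalPdf_rpow μ σ hσ c]
    _ = ∫ x : ℝ, x ^ n * ((2 * Real.pi * σ ^ 2) ^ (-(c/2)) * Real.exp (-(c/(2*σ^2) * x^2))) := h
    _ = (2 * Real.pi * σ ^ 2) ^ (-(c/2)) * ∫ x : ℝ, x ^ n * Real.exp (-(c/(2*σ^2) * x^2)) := by
        rw [← integral_const_mul]; congr 1 with x; ring

lemma key {σ c : ℝ} (hσ : 0 < σ) (hc : 0 < c) :
    (2 * π * σ ^ 2) ^ (-(c/2)) * Real.sqrt (π / (c / (2 * σ ^ 2)))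
      = (2*π) ^ ((1-c)/2) * σ ^ (1-c) * c ^ (-(1/2) : ℝ) := by
  have h2π : (0:ℝ) < 2*π := by positivity
  have hσ2 : (0:ℝ) < σ^2 := by positivity
  have hd : π / (c / (2 * σ ^ 2)) = (2*π) * σ^2 / c := by field_simp
  rw [Real.sqrt_eq_rpow, hd]
  rw [Real.div_rpow (by positivity) hc.le, Real.mul_rpow h2π.le hσ2.le,
    Real.mul_rpow h2π.le hσ2.le]
  rw [show (σ:ℝ)^2 = σ ^ (2:ℝ) by rw [Real.rpow_two], ← Real.rpow_mul hσ.le, ← Real.rpow_mul hσ.le]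
  rw [show ((2:ℝ) * -(c/2)) = -c by ring, show ((2:ℝ) * (1/2)) = 1 by norm_num]
  have e1 : (2*π) ^ ((1-c)/2) = (2*π)^(-(c/2)) * (2*π)^((1:ℝ)/2) := by
    rw [← Real.rpow_add h2π]; ring_nf
  have e2 : σ ^ ((1-c):ℝ) = σ ^ (-c:ℝ) * σ ^ ((1:ℝ):ℝ) := by
    rw [← Real.rpow_add hσ]; ring_nf
  rw [e1, e2, Real.rpow_neg hc.le]
  ring

lemma Mpdf0 (hσ : 0 < σ) (hc : 0 < c) :
    ∫ x : ℝ, (x - μ) ^ 0 * normalPdf μ σ x ^ c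
      = (2*π) ^ ((1-c)/2) * σ ^ (1-c) * c ^ (-(1/2) : ℝ) := by
  have ha : (0:ℝ) < c / (2 * σ ^ 2) := by positivity
  rw [integral_pow_pdf hσ hc 0]
  simp only [pow_zero, one_mul]
  rw [gauss0 ha, key hσ hc]

lemma Mpdf1 (hσ : 0 < σ) (hc : 0 < c) :
    ∫ x : ℝ, (x - μ) ^ 1 * normalPdf μ σ x ^ c = 0 := by
  have ha : (0:ℝ) < c / (2 * σ ^ 2) := by positivity
  rw [integral_pow_pdf hσ hc 1]
  simp only [pow_one]
  rw [gauss1 ha, mul_zero]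

lemma Mpdf3 (hσ : 0 < σ) (hc : 0 < c) :
    ∫ x : ℝ, (x - μ) ^ 3 * normalPdf μ σ x ^ c = 0 := by
  have ha : (0:ℝ) < c / (2 * σ ^ 2) := by positivity
  rw [integral_pow_pdf hσ hc 3, gauss3 ha, mul_zero]

lemma Mpdf2 (hσ : 0 < σ) (hc : 0 < c) :
    ∫ x : ℝ, (x - μ) ^ 2 * normalPdf μ σ x ^ c
      = (2*π) ^ ((1-c)/2) * σ ^ (1-c) * c ^ (-(1/2) : ℝ) * (σ^2/c) := by
  have ha : (0:ℝ) < c / (2 * σ ^ 2) := by positivity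
  have hσ2 : (σ:ℝ)^2 ≠ 0 := by positivity
  rw [integral_pow_pdf hσ hc 2, gauss2 ha]
  rw [show Real.sqrt (π / (c / (2 * σ ^ 2))) / (2 * (c / (2 * σ ^ 2)))
      = Real.sqrt (π / (c / (2 * σ ^ 2))) * (σ^2/c) by field_simp]
  rw [← mul_assoc, key hσ hc]

lemma Mpdf4 (hσ : 0 < σ) (hc : 0 < c) :
    ∫ x : ℝ, (x - μ) ^ 4 * normalPdf μ σ x ^ c
      = (2*π) ^ ((1-c)/2) * σ ^ (1-c) * c ^ (-(1/2) : ℝ) * (3*σ^4/c^2) := by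
  have ha : (0:ℝ) < c / (2 * σ ^ 2) := by positivity
  have hσ2 : (σ:ℝ)^2 ≠ 0 := by positivity
  rw [integral_pow_pdf hσ hc 4, gauss4 ha]
  rw [show 3 * Real.sqrt (π / (c / (2 * σ ^ 2))) / (4 * (c / (2 * σ ^ 2))^2)
      = Real.sqrt (π / (c / (2 * σ ^ 2))) * (3*σ^4/c^2) by field_simp; ring]
  rw [← mul_assoc, key hσ hc]

/-- Let `μ ∈ ℝ`, `σ > 0`, `β ≥ 0`, `u` the normal score vector, and
`ξ = ∫ u φ_{μ,σ}^(1+β) dx`. Then the 2×2 matrix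
`K_β = ∫ u uᵀ φ_{μ,σ}^(1+2β) dx − ξ ξᵀ` equals
`(σ^(2+2β) (2π)^β)⁻¹ [ (1+2β)^(−3/2)·diag(1, (4β²+2)/(1+2β)) − diag(0, β²/(1+β)³) ]`. -/
theorem normal_K_beta (μ σ β : ℝ) (hσ : 0 < σ) (hβ : 0 ≤ β)
    (ξ : Fin 2 → ℝ)
    (hξ : ξ = fun i => ∫ x : ℝ, normalScore μ σ x i * normalPdf μ σ x ^ (1 + β)) :
    (Matrix.of fun i j : Fin 2 =>
        (∫ x : ℝ, normalScore μ σ x i * normalScore μ σ x j * normalPdf μ σ x ^ (1 + 2 * β)) -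
          ξ i * ξ j) =
      (σ ^ (2 + 2 * β) * (2 * Real.pi) ^ β)⁻¹ •
        ((1 + 2 * β) ^ (-(3 : ℝ) / 2) •
            Matrix.diagonal ![1, (4 * β ^ 2 + 2) / (1 + 2 * β)] -
          Matrix.diagonal ![0, β ^ 2 / (1 + β) ^ 3]) := by
  have hc1 : (0:ℝ) < 1 + β := by linarith
  have hc2 : (0:ℝ) < 1 + 2*β := by linarith
  have h2π : (0:ℝ) < 2 * π := by positivity
  have hσ2 : (σ:ℝ)^2 ≠ 0 := by positivity
  have hσ3 : (σ:ℝ)^3 ≠ 0 := by positivity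
  set N1 : ℝ := (2*π) ^ ((1-(1+β))/2) * σ ^ (1-(1+β)) * (1+β) ^ (-(1/2) : ℝ) with hN1
  set N2 : ℝ := (2*π) ^ ((1-(1+2*β))/2) * σ ^ (1-(1+2*β)) * (1+2*β) ^ (-(1/2) : ℝ) with hN2
  -- ξ values
  have hξ0 : ξ 0 = 0 := by
    rw [hξ]
    show (∫ x : ℝ, normalScore μ σ x 0 * normalPdf μ σ x ^ (1 + β)) = 0
    have e : (fun x : ℝ => normalScore μ σ x 0 * normalPdf μ σ x ^ (1 + β))
        = fun x : ℝ => (σ^2)⁻¹ * ((x - μ) ^ 1 * normalPdf μ σ x ^ (1 + β)) := by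
      funext x; simp only [normalScore, Matrix.cons_val_zero]; ring
    rw [e, integral_const_mul, Mpdf1 hσ hc1, mul_zero]
  have hξ1 : ξ 1 = N1 * ((σ^2/(1+β) - σ^2)/σ^3) := by
    rw [hξ]
    show (∫ x : ℝ, normalScore μ σ x 1 * normalPdf μ σ x ^ (1 + β)) = _
    have e : (fun x : ℝ => normalScore μ σ x 1 * normalPdf μ σ x ^ (1 + β))
        = fun x : ℝ => (σ^3)⁻¹ * ((x - μ) ^ 2 * normalPdf μ σ x ^ (1 + β))
          - (σ^3)⁻¹ * σ^2 * ((x - μ) ^ 0 * normalPdf μ σ x ^ (1 + β)) := by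
      funext x; simp only [normalScore, Matrix.cons_val_one, Matrix.head_cons, Matrix.cons_val_zero]; ring
    rw [e, integral_sub (((integrable_pow_pdf hσ hc1 2).const_mul _))
      (((integrable_pow_pdf hσ hc1 0).const_mul _)),
      integral_const_mul, integral_const_mul, Mpdf2 hσ hc1, Mpdf0 hσ hc1, ← hN1]
    ring
  -- squared ξ₁
  have hN1sq : N1 * N1 = (2*π)^(-β) * σ^(-(2*β):ℝ) * (1+β)⁻¹ := by
    have : N1 * N1 = ((2*π)^((1-(1+β))/2) * (2*π)^((1-(1+β))/2)) *
        (σ^(1-(1+β)) * σ^(1-(1+β))) * ((1+β)^(-(1/2):ℝ) * (1+β)^(-(1/2):ℝ)) := by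
      rw [hN1]; ring
    rw [this, ← Real.rpow_add h2π, ← Real.rpow_add hσ, ← Real.rpow_add hc1,
      show (1-(1+β))/2 + (1-(1+β))/2 = -β by ring,
      show (1-(1+β)) + (1-(1+β)) = -(2*β) by ring,
      show (-(1/2):ℝ) + (-(1/2)) = -1 by ring, Real.rpow_neg_one]
  have hξsq : ξ 1 * ξ 1 = (2*π)^(-β) * σ^(-(2*β):ℝ) * (σ^2)⁻¹ * (β^2/(1+β)^3) := by
    rw [hξ1]
    have : N1 * ((σ^2/(1+β) - σ^2)/σ^3) * (N1 * ((σ^2/(1+β) - σ^2)/σ^3))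
        = (N1 * N1) * (((σ^2/(1+β) - σ^2)/σ^3) * ((σ^2/(1+β) - σ^2)/σ^3)) := by ring
    rw [this, hN1sq]
    have hc1' : (1+β) ≠ 0 := ne_of_gt hc1
    field_simp
    ring
  -- decompositions
  have hD : (σ ^ (2+2*β) * (2*π)^β)⁻¹ = (2*π)^(-β) * σ^(-(2*β):ℝ) * (σ^2)⁻¹ := by
    rw [mul_inv, ← Real.rpow_neg hσ.le, ← Real.rpow_neg h2π.le,
      show -(2+2*β) = -(2*β) + -((2:ℕ):ℝ) by push_cast; ring, Real.rpow_add hσ,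
      show σ ^ (-((2:ℕ):ℝ)) = (σ^(2:ℕ))⁻¹ by rw [Real.rpow_neg hσ.le, Real.rpow_natCast]]
    ring
  have hN2' : N2 = (2*π)^(-β) * σ^(-(2*β):ℝ) * (1+2*β)^(-(1/2):ℝ) := by
    rw [hN2, show (1-(1+2*β))/2 = -β by ring, show 1-(1+2*β) = -(2*β) by ring]
  have hc2a : (1+2*β) ^ (-(3:ℝ)/2) = (1+2*β)^(-(1/2):ℝ) * (1+2*β)⁻¹ := by
    rw [← Real.rpow_neg_one (1+2*β), ← Real.rpow_add hc2]
    norm_num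
  have hc1' : (1+β) ≠ 0 := ne_of_gt hc1
  have hc2' : (1+2*β) ≠ 0 := ne_of_gt hc2
  -- entry integrals
  have I00 : (∫ x : ℝ, normalScore μ σ x 0 * normalScore μ σ x 0 * normalPdf μ σ x ^ (1 + 2*β))
      = (σ^2*σ^2)⁻¹ * (N2 * (σ^2/(1+2*β))) := by
    have e : (fun x : ℝ => normalScore μ σ x 0 * normalScore μ σ x 0 * normalPdf μ σ x ^ (1 + 2*β))
        = fun x : ℝ => (σ^2*σ^2)⁻¹ * ((x - μ) ^ 2 * normalPdf μ σ x ^ (1 + 2*β)) := by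
      funext x; simp only [normalScore, Matrix.cons_val_zero]; ring
    rw [e, integral_const_mul, Mpdf2 hσ hc2, ← hN2]
  have I01 : (∫ x : ℝ, normalScore μ σ x 0 * normalScore μ σ x 1 * normalPdf μ σ x ^ (1 + 2*β))
      = 0 := by
    have e : (fun x : ℝ => normalScore μ σ x 0 * normalScore μ σ x 1 * normalPdf μ σ x ^ (1 + 2*β))
        = fun x : ℝ => (σ^5)⁻¹ * ((x - μ) ^ 3 * normalPdf μ σ x ^ (1 + 2*β))
          - (σ^3)⁻¹ * ((x - μ) ^ 1 * normalPdf μ σ x ^ (1 + 2*β)) := by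
      funext x
      simp only [normalScore, Matrix.cons_val_zero, Matrix.cons_val_one, Matrix.head_cons]
      have hσ' : σ ≠ 0 := ne_of_gt hσ
      field_simp
    rw [e, integral_sub ((integrable_pow_pdf hσ hc2 3).const_mul _)
      ((integrable_pow_pdf hσ hc2 1).const_mul _),
      integral_const_mul, integral_const_mul, Mpdf3 hσ hc2, Mpdf1 hσ hc2]
    simp
  have I10 : (∫ x : ℝ, normalScore μ σ x 1 * normalScore μ σ x 0 * normalPdf μ σ x ^ (1 + 2*β))
      = 0 := by
    rw [← I01]; congr 1 with x; ring
  have I11 : (∫ x : ℝ, normalScore μ σ x 1 * normalScore μ σ x 1 * normalPdf μ σ x ^ (1 + 2*β))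
      = ((σ^6)⁻¹ * (N2 * (3*σ^4/(1+2*β)^2)) - 2*(σ^6)⁻¹*σ^2 * (N2 * (σ^2/(1+2*β))))
          + (σ^6)⁻¹*σ^4 * N2 := by
    have e : (fun x : ℝ => normalScore μ σ x 1 * normalScore μ σ x 1 * normalPdf μ σ x ^ (1 + 2*β))
        = fun x : ℝ => ((σ^6)⁻¹ * ((x - μ) ^ 4 * normalPdf μ σ x ^ (1 + 2*β))
            - 2*(σ^6)⁻¹*σ^2 * ((x - μ) ^ 2 * normalPdf μ σ x ^ (1 + 2*β)))
          + (σ^6)⁻¹*σ^4 * ((x - μ) ^ 0 * normalPdf μ σ x ^ (1 + 2*β)) := by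
      funext x
      simp only [normalScore, Matrix.cons_val_one, Matrix.head_cons, Matrix.cons_val_zero]
      ring
    have hInt42 : Integrable (fun x : ℝ =>
        (σ^6)⁻¹ * ((x - μ) ^ 4 * normalPdf μ σ x ^ (1 + 2*β))
          - 2*(σ^6)⁻¹*σ^2 * ((x - μ) ^ 2 * normalPdf μ σ x ^ (1 + 2*β))) := by
      exact ((integrable_pow_pdf hσ hc2 4).const_mul _).sub
        ((integrable_pow_pdf hσ hc2 2).const_mul _)
    rw [e, integral_add hInt42 ((integrable_pow_pdf hσ hc2 0).const_mul _),
      integral_sub ((integrable_pow_pdf hσ hc2 4).const_mul _)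
        ((integrable_pow_pdf hσ hc2 2).const_mul _),
      integral_const_mul, integral_const_mul, integral_const_mul,
      Mpdf4 hσ hc2, Mpdf2 hσ hc2, Mpdf0 hσ hc2, ← hN2]
  -- conclude
  ext i j
  fin_cases i <;> fin_cases j
  · show (∫ x : ℝ, normalScore μ σ x 0 * normalScore μ σ x 0 * normalPdf μ σ x ^ (1 + 2*β))
        - ξ 0 * ξ 0
      = (σ ^ (2 + 2 * β) * (2 * Real.pi) ^ β)⁻¹ * ((1 + 2 * β) ^ (-(3:ℝ)/2) * 1 - 0)
    rw [I00, hξ0, hD, hN2', hc2a]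
    field_simp
    ring
  · show (∫ x : ℝ, normalScore μ σ x 0 * normalScore μ σ x 1 * normalPdf μ σ x ^ (1 + 2*β))
        - ξ 0 * ξ 1
      = (σ ^ (2 + 2 * β) * (2 * Real.pi) ^ β)⁻¹ * ((1 + 2 * β) ^ (-(3:ℝ)/2) * 0 - 0)
    rw [I01, hξ0]
    ring
  · show (∫ x : ℝ, normalScore μ σ x 1 * normalScore μ σ x 0 * normalPdf μ σ x ^ (1 + 2*β))
        - ξ 1 * ξ 0
      = (σ ^ (2 + 2 * β) * (2 * Real.pi) ^ β)⁻¹ * ((1 + 2 * β) ^ (-(3:ℝ)/2) * 0 - 0)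
    rw [I10, hξ0]
    ring
  · show (∫ x : ℝ, normalScore μ σ x 1 * normalScore μ σ x 1 * normalPdf μ σ x ^ (1 + 2*β))
        - ξ 1 * ξ 1
      = (σ ^ (2 + 2 * β) * (2 * Real.pi) ^ β)⁻¹
        * ((1 + 2 * β) ^ (-(3:ℝ)/2) * ((4 * β ^ 2 + 2) / (1 + 2 * β)) - β ^ 2 / (1 + β) ^ 3)
    rw [I11, hξsq, hD, hN2', hc2a]
    field_simp
    ring
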